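/- Let A be a commutative ring, h a positive integer, r = 2h, and F ∈ Matrix (Fin r) (Fin r) A a skew-symmetric matrix (Fᵀ = −F). In the exterior algebra Λ := ExteriorAlgebra A (Fin r → A), let e_α denote the image under the canonical inclusion ι of the α-th standard basis vector, and set etop := e_0 * e_1 * ⋯ * e_{r−1}. Define Ω_F := −Σ_{α < β} (F α β) • (e_α * e_β) ∈ Λ. Then 2^h • Ω_F^h = (−1)^h • ( Σ_{σ ∈ Equiv.Perm (Fin r)} (sign σ) • Π_{k=0}^{h−1} F (σ(2k)) (σ(2k+1)) ) • etop. (Equivalently, Ω_F^h = h! · pf(F) · etop, where pf(F) is the Pfaffian of F defined by the permutation-sum formula with the normalization (−1)^h/(2^h h!).) -/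

import Mathlib

lemma aux_sum_pow {R : Type*} [Semiring R] {ι : Type*} [Fintype ι] (g : ι → R) :
    ∀ n : ℕ, (∑ p : ι, g p) ^ n = ∑ f : Fin n → ι, (List.ofFn (g ∘ f)).prod
  | 0 => by simp
  | n + 1 => by
    rw [pow_succ', aux_sum_pow g n, Finset.mul_sum,
      ← (Fin.consEquiv (fun _ : Fin (n+1) => ι)).sum_comp
        (fun f => (List.ofFn (g ∘ f)).prod),
      Fintype.sum_prod_type]
    rw [Finset.sum_comm]
    refine Finset.sum_congr rfl fun f _ => ?_
    rw [Finset.sum_mul]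
    refine Finset.sum_congr rfl fun p _ => ?_
    simp only [Fin.consEquiv_apply, List.ofFn_succ, Fin.cons_zero, Fin.cons_succ,
      List.prod_cons, Function.comp]
    rfl

lemma aux_smul_prod {A : Type*} [CommSemiring A] {L : Type*} [Semiring L] [Algebra A L] :
    ∀ (n : ℕ) (c : Fin n → A) (x : Fin n → L),
      (List.ofFn fun k => c k • x k).prod = (∏ k, c k) • (List.ofFn x).prod
  | 0, c, x => by simp
  | n + 1, c, x => by
    rw [List.ofFn_succ, List.ofFn_succ, List.prod_cons, List.prod_cons,
      aux_smul_prod n (fun k => c k.succ) (fun k => x k.succ),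
      Fin.prod_univ_succ, smul_mul_smul_comm]

lemma aux_double_prod {M : Type*} [Monoid M] :
    ∀ (n : ℕ) (x : Fin (2 * n) → M),
      (List.ofFn x).prod =
        (List.ofFn fun k : Fin n => x ⟨2 * k.1, by omega⟩ * x ⟨2 * k.1 + 1, by omega⟩).prod
  | 0, x => by simp
  | n + 1, x => by
    have h1 : (List.ofFn x).prod
        = x 0 * (x (Fin.succ 0) * (List.ofFn fun i : Fin (2*n) => x i.succ.succ).prod) := by
      rw [List.ofFn_succ (f := x), List.ofFn_succ, List.prod_cons, List.prod_cons]
      rfl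
    rw [h1, aux_double_prod n (fun i : Fin (2*n) => x i.succ.succ),
      List.ofFn_succ, List.prod_cons, ← mul_assoc]
    congr 1

def aux_interleave {α : Type*} {h : ℕ} (f : Fin h → α × α) : Fin (2 * h) → α :=
  fun i => if i.1 % 2 = 0 then (f ⟨i.1 / 2, by omega⟩).1 else (f ⟨i.1 / 2, by omega⟩).2

lemma aux_interleave_even {α : Type*} {h : ℕ} (f : Fin h → α × α) (k : Fin h) :
    aux_interleave f ⟨2 * k.1, by omega⟩ = (f k).1 := by
  have h2 : (2 * k.1) % 2 = 0 := by omega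
  have h3 : (⟨2 * k.1 / 2, by omega⟩ : Fin h) = k := Fin.ext (by simp <;> omega)
  rw [aux_interleave, if_pos h2, h3]

lemma aux_interleave_odd {α : Type*} {h : ℕ} (f : Fin h → α × α) (k : Fin h) :
    aux_interleave f ⟨2 * k.1 + 1, by omega⟩ = (f k).2 := by
  have h2 : ¬ (2 * k.1 + 1) % 2 = 0 := by omega
  have h3 : (⟨(2 * k.1 + 1) / 2, by omega⟩ : Fin h) = k := Fin.ext (by simp <;> omega)
  rw [aux_interleave, if_neg h2, h3]

set_option maxHeartbeats 1000000

open scoped Matrix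

theorem stochasticGBC.pow_eq_pfaffian_smul_top
    (A : Type*) [CommRing A] (h : ℕ) (hh : 0 < h) (r : ℕ) (hr : r = 2 * h)
    (F : Matrix (Fin r) (Fin r) A) (hF : Fᵀ = -F) :
    let e : Fin r → ExteriorAlgebra A (Fin r → A) :=
      fun α => ExteriorAlgebra.ι A (Pi.single α 1)
    let etop : ExteriorAlgebra A (Fin r → A) := ((List.finRange r).map e).prod
    let Ω : ExteriorAlgebra A (Fin r → A) :=
      -(∑ α : Fin r, ∑ β : Fin r, if α < β then F α β • (e α * e β) else 0)
    (2 ^ h : ℕ) • Ω ^ h =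
      ((-1 : A) ^ h *
        (∑ σ : Equiv.Perm (Fin r),
          (Equiv.Perm.sign σ : ℤ) •
            ∏ k : Fin h,
              F (σ ⟨2 * k.1, by have := k.2; omega⟩)
                (σ ⟨2 * k.1 + 1, by have := k.2; omega⟩))) • etop := by
  intro e etop Ω
  subst hr
  classical
  set v : Fin (2 * h) → (Fin (2 * h) → A) := fun i => Pi.single i 1 with hv
  have hF' : ∀ α β, F β α = -F α β := fun α β => by
    simpa using congrFun (congrFun hF α) β
  have hee : ∀ α β : Fin (2 * h), e β * e α = -(e α * e β) := fun α β =>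
    eq_neg_of_add_eq_zero_right (ExteriorAlgebra.ι_add_mul_swap _ _)
  have hee0 : ∀ α : Fin (2 * h), e α * e α = 0 := fun α => ExteriorAlgebra.ι_sq_zero _
  set S : ExteriorAlgebra A (Fin (2 * h) → A) :=
    ∑ α : Fin (2 * h), ∑ β : Fin (2 * h), if α < β then F α β • (e α * e β) else 0 with hS
  have hΩ : Ω = -S := rfl
  set g : Fin (2 * h) × Fin (2 * h) → ExteriorAlgebra A (Fin (2 * h) → A) :=
    fun p => F p.1 p.2 • (e p.1 * e p.2) with hg
  have hetop2 : etop = ExteriorAlgebra.ιMulti A (2 * h) v := by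
    rw [ExteriorAlgebra.ιMulti_apply, List.ofFn_eq_map]
  -- Step A : 2 • Ω = -(∑ p, g p)
  have hA : (2 : ℕ) • Ω = -(∑ p, g p) := by
    have hT : (∑ p, g p) = 2 • S := by
      rw [Fintype.sum_prod_type]
      have hsplit : ∀ α β : Fin (2 * h), g (α, β)
          = (if α < β then F α β • (e α * e β) else 0)
            + (if β < α then F α β • (e α * e β) else 0) := by
        intro α β
        rcases lt_trichotomy α β with hlt | heq | hgt
        · rw [if_pos hlt, if_neg (asymm hlt), add_zero]
        · subst heq
          rw [if_neg (lt_irrefl α), add_zero]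
          simp [hg, hee0 α]
        · rw [if_neg (asymm hgt), if_pos hgt, zero_add]
      calc ∑ α : Fin (2*h), ∑ β : Fin (2*h), g (α, β)
          = ∑ α : Fin (2*h), ∑ β : Fin (2*h),
              ((if α < β then F α β • (e α * e β) else 0)
              + (if β < α then F α β • (e α * e β) else 0)) :=
            Finset.sum_congr rfl fun α _ => Finset.sum_congr rfl fun β _ => hsplit α β
        _ = S + ∑ α : Fin (2*h), ∑ β : Fin (2*h),
              (if β < α then F α β • (e α * e β) else 0) := by
            rw [hS]
            simp [Finset.sum_add_distrib]
        _ = S + S := by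
            congr 1
            rw [hS, Finset.sum_comm]
            refine Finset.sum_congr rfl fun α _ => Finset.sum_congr rfl fun β _ => ?_
            by_cases hab : α < β
            · rw [if_pos hab, if_pos hab, hF', hee, neg_smul, smul_neg, neg_neg]
            · rw [if_neg hab, if_neg hab]
        _ = 2 • S := (two_smul ℕ S).symm
    rw [hΩ, hT, smul_neg]
  -- Step C : each term of the expansion
  have hC : ∀ f : Fin h → Fin (2*h) × Fin (2*h),
      (List.ofFn (g ∘ f)).prod
        = (∏ k, F (f k).1 (f k).2) •
            ExteriorAlgebra.ιMulti A (2 * h) (v ∘ aux_interleave f) := by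
    intro f
    have h1 : (g ∘ f) = fun k => F (f k).1 (f k).2 • (e (f k).1 * e (f k).2) := rfl
    rw [h1, aux_smul_prod h (fun k => F (f k).1 (f k).2) (fun k => e (f k).1 * e (f k).2)]
    congr 1
    rw [ExteriorAlgebra.ιMulti_apply]
    have h3 : (List.ofFn fun i : Fin (2*h) => ExteriorAlgebra.ι A ((v ∘ aux_interleave f) i)).prod
        = (List.ofFn fun i : Fin (2*h) => ExteriorAlgebra.ι A (v (aux_interleave f i))).prod := rfl
    rw [h3, aux_double_prod h (fun i => ExteriorAlgebra.ι A (v (aux_interleave f i)))]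
    have h4 : (fun k : Fin h =>
          ExteriorAlgebra.ι A (v (aux_interleave f ⟨2*k.1, by omega⟩)) *
          ExteriorAlgebra.ι A (v (aux_interleave f ⟨2*k.1+1, by omega⟩)))
        = fun k : Fin h => e (f k).1 * e (f k).2 := by
      funext k
      rw [aux_interleave_even f k, aux_interleave_odd f k]
    rw [h4]
  -- interleaving a permutation gives back the permutation
  have hφw : ∀ σ : Equiv.Perm (Fin (2*h)),
      aux_interleave (fun k : Fin h => (σ ⟨2*k.1, by omega⟩, σ ⟨2*k.1+1, by omega⟩)) = ⇑σ := by
    intro σ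
    funext i
    rcases Nat.even_or_odd i.1 with ⟨m, hm⟩ | ⟨m, hm⟩
    · have hm' : m < h := by omega
      have hi : i = ⟨2*m, by omega⟩ := Fin.ext (show i.1 = 2*m by omega)
      rw [hi, aux_interleave_even _ ⟨m, hm'⟩]
    · have hm' : m < h := by omega
      have hi : i = ⟨2*m+1, by omega⟩ := Fin.ext (show i.1 = 2*m+1 by omega)
      rw [hi, aux_interleave_odd _ ⟨m, hm'⟩]
  have hzero : ∀ f : Fin h → Fin (2*h) × Fin (2*h), ¬ Function.Injective (aux_interleave f) →
      ExteriorAlgebra.ιMulti A (2 * h) (v ∘ aux_interleave f) = 0 := by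
    intro f hf
    rw [Function.not_injective_iff] at hf
    obtain ⟨i, j, hij, hne⟩ := hf
    exact AlternatingMap.map_eq_zero_of_eq _ _
      (show (v ∘ aux_interleave f) i = (v ∘ aux_interleave f) j by
        simp only [Function.comp_apply, hij]) hne
  have hsc : ∀ (s : ℤˣ) (c : A) (x : ExteriorAlgebra A (Fin (2*h) → A)),
      ((s : ℤ) • c) • x = c • (s • x) := by
    intro s c x
    rw [Units.smul_def, ← Int.cast_smul_eq_zsmul A ((s:ℤ)) x, zsmul_eq_mul, mul_smul,
      smul_comm]
  -- Step D : the sum over sequences equals the permutation sum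
  have hD : (∑ f : Fin h → Fin (2*h) × Fin (2*h),
        (∏ k, F (f k).1 (f k).2) • ExteriorAlgebra.ιMulti A (2 * h) (v ∘ aux_interleave f))
      = ∑ σ : Equiv.Perm (Fin (2*h)),
          ((Equiv.Perm.sign σ : ℤ) •
            ∏ k : Fin h, F (σ ⟨2*k.1, by omega⟩) (σ ⟨2*k.1+1, by omega⟩)) • etop := by
    rw [← Finset.sum_filter_of_ne
      (p := fun f : Fin h → Fin (2*h) × Fin (2*h) => Function.Injective (aux_interleave f))
      (fun f _ hne => by
        by_contra hni
        exact hne (by rw [hzero f hni, smul_zero]))]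
    refine (Finset.sum_bij
      (fun (σ : Equiv.Perm (Fin (2*h))) _ =>
        fun k : Fin h => (σ ⟨2*k.1, by omega⟩, σ ⟨2*k.1+1, by omega⟩)) ?_ ?_ ?_ ?_).symm
    · intro σ _
      simp only [Finset.mem_filter, Finset.mem_univ, true_and]
      rw [hφw σ]
      exact σ.injective
    · intro σ _ τ _ hst
      have h2 := congrArg aux_interleave hst
      rw [hφw, hφw] at h2
      exact Equiv.coe_fn_injective h2
    · intro f hf
      simp only [Finset.mem_filter, Finset.mem_univ, true_and] at hf
      have hbij : Function.Bijective (aux_interleave f) := Finite.injective_iff_bijective.mp hf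
      refine ⟨Equiv.ofBijective _ hbij, Finset.mem_univ _, ?_⟩
      funext k
      refine Prod.ext ?_ ?_
      · exact aux_interleave_even f k
      · exact aux_interleave_odd f k
    · intro σ _
      rw [hφw σ, (ExteriorAlgebra.ιMulti A (2 * h)).map_perm v σ, ← hetop2]
      exact hsc _ _ _
  -- Assemble
  rw [← smul_pow, hA, neg_pow, aux_sum_pow g h]
  have hBC : (∑ f : Fin h → Fin (2*h) × Fin (2*h), (List.ofFn (g ∘ f)).prod)
      = ∑ f : Fin h → Fin (2*h) × Fin (2*h),
          (∏ k, F (f k).1 (f k).2) • ExteriorAlgebra.ιMulti A (2 * h) (v ∘ aux_interleave f) :=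
    Finset.sum_congr rfl fun f _ => hC f
  rw [hBC, hD, mul_smul, Finset.sum_smul]
  have hneg : ∀ X : ExteriorAlgebra A (Fin (2*h) → A),
      (-1 : ExteriorAlgebra A (Fin (2*h) → A)) ^ h * X = ((-1 : A) ^ h) • X := by
    intro X
    rw [Algebra.smul_def, map_pow, map_neg, map_one]
  rw [hneg]
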